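/- Let n, λ, μ, b ∈ ℂ with μ ≠ 0, b ∉ ℤ and b + n ∉ ℤ. For k ≥ 1 let M_k be the 2×2 complex matrix with rows (1 + λ/((k+b)(k+b+n−1)), μ²/((k+b)(k+b+n−1))) and (1, 0). Then the infinite products R_k = M_k M_{k+1} ⋯ exist for every k ≥ 1. Set c_k = (R_k)_{21} for k ≥ 1, c₀ = (R₁)_{11}, and define a_k = μ^k c_k / (b(b+1)⋯(b+k)) for k ≥ 0 (with the Pochhammer product b(b+1)⋯(b+k) of k+1 factors). Then the sequence (a_k)_{k≥0} satisfies the Heun recurrence at every k ≥ 1, and the power series ∑_{k≥1} a_k z^k has infinite radius of convergence. -/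

import Mathlib

open Filter Topology Matrix

/-- The ordered partial product `M k * M (k+1) * ⋯ * M (k+n)`. -/
def opProd {A : Type*} [Mul A] (M : ℕ → A) (k : ℕ) : ℕ → A
  | 0 => M k
  | n + 1 => opProd M k n * M (k + n + 1)

/-- The Heun recurrence with parameters `n, λ, μ, b` at index `k`, relating consecutive
coefficients `x = a (k-1)`, `y = a k`, `z = a (k+1)`. -/
def HeunRec (n lam mu b : ℂ) (x y z k : ℂ) : Prop :=
  ((k + b) * (k + b + n - 1) + lam) * y - mu * (k + b + n - 1) * x + mu * (k + b + 1) * z = 0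

lemma opProd_left' {A : Type*} [Semigroup A] (M : ℕ → A) (k : ℕ) :
    ∀ m, opProd M k (m + 1) = M k * opProd M (k + 1) m := by
  intro m
  induction m with
  | zero => show M k * M (k + 0 + 1) = M k * M (k + 1); rw [Nat.add_zero]
  | succ m ih =>
      show opProd M k (m + 1) * M (k + (m+1) + 1) = M k * (opProd M (k+1) m * M (k + 1 + m + 1))
      rw [ih, mul_assoc]
      have : k + (m + 1) + 1 = k + 1 + m + 1 := by omega
      rw [this]

lemma aux_bigO' (w : ℂ) :
    Asymptotics.IsBigO atTop (fun j : ℕ => ((j:ℂ) + w)⁻¹) (fun j : ℕ => ((j:ℝ))⁻¹) := by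
  rw [Asymptotics.isBigO_iff]
  refine ⟨2, ?_⟩
  have h := (tendsto_natCast_atTop_atTop (R := ℝ)).eventually_ge_atTop (2 * ‖w‖ + 2)
  filter_upwards [h] with j hj
  have hw : 0 ≤ ‖w‖ := norm_nonneg w
  have hj1 : (1:ℝ) ≤ (j:ℝ) := by linarith
  have hnj : ‖(j:ℂ)‖ = (j:ℝ) := by simp
  have hlow : (j:ℝ) / 2 ≤ ‖(j:ℂ) + w‖ := by
    have h2 : ‖(j:ℂ)‖ - ‖w‖ ≤ ‖(j:ℂ) + w‖ := by
      have := norm_sub_le ((j:ℂ) + w) w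
      have h3 : ‖((j:ℂ) + w) - w‖ = ‖(j:ℂ)‖ := by simp
      linarith [norm_sub_norm_le ((j:ℂ) + w) w,
        (by simp : ‖((j:ℂ) + w) - w‖ = ‖(j:ℂ)‖) ▸ norm_sub_le ((j:ℂ) + w) w]
    rw [hnj] at h2
    linarith
  have hpos : (0:ℝ) < (j:ℝ) / 2 := by linarith
  have hin : ‖((j:ℂ) + w)⁻¹‖ ≤ ((j:ℝ)/2)⁻¹ := by
    rw [norm_inv]
    exact inv_anti₀ hpos hlow
  calc ‖((j:ℂ) + w)⁻¹‖ ≤ ((j:ℝ)/2)⁻¹ := hin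
    _ = 2 * ((j:ℝ))⁻¹ := by field_simp
    _ ≤ 2 * ‖((j:ℝ))⁻¹‖ := by gcongr; exact le_abs_self _

lemma aux_summable' (b c lam mus : ℂ) :
    Summable (fun j : ℕ =>
      ‖lam / (((j:ℂ) + b) * ((j:ℂ) + c))‖ + ‖mus / (((j:ℂ) + b) * ((j:ℂ) + c))‖) := by
  have hsq : Summable (fun j : ℕ => ((j:ℝ))⁻¹ * ((j:ℝ))⁻¹) := by
    have h2 : Summable (fun j : ℕ => ((j:ℝ)^2)⁻¹) := by
      simpa [one_div] using Real.summable_one_div_nat_pow.mpr (by norm_num : 1 < 2)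
    refine h2.congr fun j => by rw [sq, mul_inv]
  have hO : Asymptotics.IsBigO atTop (fun j : ℕ => (((j:ℂ) + b) * ((j:ℂ) + c))⁻¹)
      (fun j : ℕ => ((j:ℝ))⁻¹ * ((j:ℝ))⁻¹) := by
    have h := (aux_bigO' b).mul (aux_bigO' c)
    calc (fun j : ℕ => (((j:ℂ) + b) * ((j:ℂ) + c))⁻¹)
        = (fun j : ℕ => ((j:ℂ) + b)⁻¹ * ((j:ℂ) + c)⁻¹) := by funext j; rw [mul_inv]
      _ =O[atTop] _ := h
  have hinv : Summable (fun j : ℕ => (((j:ℂ) + b) * ((j:ℂ) + c))⁻¹) :=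
    summable_of_isBigO_nat hsq hO
  have hlam : Summable (fun j : ℕ => ‖lam / (((j:ℂ) + b) * ((j:ℂ) + c))‖) := by
    have := (hinv.mul_left lam).norm
    simpa [div_eq_mul_inv] using this
  have hmus : Summable (fun j : ℕ => ‖mus / (((j:ℂ) + b) * ((j:ℂ) + c))‖) := by
    have := (hinv.mul_left mus).norm
    simpa [div_eq_mul_inv] using this
  exact hlam.add hmus
lemma prod_converges (M : ℕ → Matrix (Fin 2) (Fin 2) ℂ) (ε δ : ℕ → ℂ) (e : ℕ → ℝ)
    (he0 : ∀ j, 0 ≤ e j) (heb : ∀ j, ‖ε j‖ + ‖δ j‖ ≤ e j) (hes : Summable e)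
    (hM : ∀ k, 1 ≤ k → M k = !![1 + ε k, δ k; 1, 0]) (k : ℕ) (hk : 1 ≤ k) :
    ∃ L : Matrix (Fin 2) (Fin 2) ℂ,
      Tendsto (fun m => opProd M k m) atTop (nhds L) ∧
      ∀ i, ‖L i 0‖ ≤ Real.exp (∑' j, e j) ∧ L i 1 = 0 := by
  set B := Real.exp (∑' j, e j) with hBdef
  have hB1 : 1 ≤ B := Real.one_le_exp (tsum_nonneg he0)
  set P : ℕ → Matrix (Fin 2) (Fin 2) ℂ := fun m => opProd M k m with hPdef
  have hPs : ∀ m, P (m+1) = P m * M (k + m + 1) := fun m => rfl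
  have hrec0 : ∀ m i, P (m+1) i 0 = P m i 0 * (1 + ε (k+m+1)) + P m i 1 := by
    intro m i
    rw [hPs, Matrix.mul_apply, Fin.sum_univ_two, hM (k+m+1) (by omega)]
    simp
  have hrec1 : ∀ m i, P (m+1) i 1 = P m i 0 * δ (k+m+1) := by
    intro m i
    rw [hPs, Matrix.mul_apply, Fin.sum_univ_two, hM (k+m+1) (by omega)]
    simp
  -- norms of entries of M k
  have hrow : ∀ i, ‖M k i 0‖ + ‖M k i 1‖ ≤ 1 + e k := by
    intro i
    rw [hM k hk]
    fin_cases i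
    · simp only [Matrix.cons_val', Matrix.cons_val_zero, Matrix.cons_val_one, Matrix.head_cons,
        Matrix.empty_val', Matrix.cons_val_fin_one, Matrix.head_fin_const]
      calc ‖1 + ε k‖ + ‖δ k‖ ≤ (‖(1:ℂ)‖ + ‖ε k‖) + ‖δ k‖ := by
            gcongr; exact norm_add_le _ _
        _ = 1 + (‖ε k‖ + ‖δ k‖) := by rw [norm_one]; ring
        _ ≤ 1 + e k := by linarith [heb k]
    · have h : ‖(1:ℂ)‖ + ‖(0:ℂ)‖ ≤ 1 + e k := by simp [he0 k]
      simpa using h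
  have hS : ∀ m i, ‖P m i 0‖ + ‖P m i 1‖ ≤ Real.exp (∑ j ∈ Finset.range (k+m+1), e j) := by
    intro m
    induction m with
    | zero =>
        intro i
        calc ‖P 0 i 0‖ + ‖P 0 i 1‖ ≤ 1 + e k := hrow i
          _ ≤ Real.exp (e k) := by linarith [Real.add_one_le_exp (e k)]
          _ ≤ Real.exp (∑ j ∈ Finset.range (k+0+1), e j) := by
              apply Real.exp_le_exp.mpr
              exact Finset.single_le_sum (fun j _ => he0 j) (by simp)
    | succ m ih =>
        intro i
        have h0 : ‖P (m+1) i 0‖ ≤ ‖P m i 0‖ * (1 + ‖ε (k+m+1)‖) + ‖P m i 1‖ := by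
          rw [hrec0]
          calc ‖P m i 0 * (1 + ε (k+m+1)) + P m i 1‖
              ≤ ‖P m i 0 * (1 + ε (k+m+1))‖ + ‖P m i 1‖ := norm_add_le _ _
            _ ≤ ‖P m i 0‖ * (1 + ‖ε (k+m+1)‖) + ‖P m i 1‖ := by
                gcongr
                rw [norm_mul]
                gcongr
                calc ‖(1:ℂ) + ε (k+m+1)‖ ≤ ‖(1:ℂ)‖ + ‖ε (k+m+1)‖ := norm_add_le _ _
                  _ = 1 + ‖ε (k+m+1)‖ := by rw [norm_one]
        have h1 : ‖P (m+1) i 1‖ ≤ ‖P m i 0‖ * ‖δ (k+m+1)‖ := by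
          rw [hrec1, norm_mul]
        have hsum : ‖P (m+1) i 0‖ + ‖P (m+1) i 1‖
            ≤ (1 + e (k+m+1)) * (‖P m i 0‖ + ‖P m i 1‖) := by
          have hε : ‖ε (k+m+1)‖ + ‖δ (k+m+1)‖ ≤ e (k+m+1) := heb _
          have hp0 : (0:ℝ) ≤ ‖P m i 0‖ := norm_nonneg _
          have hp1 : (0:ℝ) ≤ ‖P m i 1‖ := norm_nonneg _
          have hε0 : (0:ℝ) ≤ ‖ε (k+m+1)‖ := norm_nonneg _
          have hδ0 : (0:ℝ) ≤ ‖δ (k+m+1)‖ := norm_nonneg _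
          nlinarith [h0, h1]
        calc ‖P (m+1) i 0‖ + ‖P (m+1) i 1‖
            ≤ (1 + e (k+m+1)) * (‖P m i 0‖ + ‖P m i 1‖) := hsum
          _ ≤ Real.exp (e (k+m+1)) * Real.exp (∑ j ∈ Finset.range (k+m+1), e j) := by
              have h1e : 1 + e (k+m+1) ≤ Real.exp (e (k+m+1)) := by
                have := Real.add_one_le_exp (e (k+m+1)); linarith
              have hpos : 0 ≤ 1 + e (k+m+1) := by linarith [he0 (k+m+1)]
              have hnn : 0 ≤ ‖P m i 0‖ + ‖P m i 1‖ := by positivity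
              exact mul_le_mul h1e (ih i) hnn (Real.exp_nonneg _)
          _ = Real.exp (∑ j ∈ Finset.range (k+(m+1)+1), e j) := by
              rw [← Real.exp_add]
              have h : k + (m+1) + 1 = (k + m + 1) + 1 := by omega
              rw [h, Finset.sum_range_succ e (k+m+1), add_comm (e (k+m+1))]
  have hSB : ∀ m i, ‖P m i 0‖ + ‖P m i 1‖ ≤ B := by
    intro m i
    refine (hS m i).trans ?_
    apply Real.exp_le_exp.mpr
    exact Summable.sum_le_tsum _ (fun j _ => he0 j) hes
  have hP0B : ∀ m i, ‖P m i 0‖ ≤ B := fun m i => by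
    have := hSB m i; have := norm_nonneg (P m i 1); linarith [hSB m i]
  have hP1 : ∀ m i, ‖P m i 1‖ ≤ B * e (k+m) := by
    intro m i
    cases m with
    | zero =>
        show ‖M k i 1‖ ≤ B * e (k + 0)
        have h1 : ‖M k i 1‖ ≤ e k := by
          rw [hM k hk]
          fin_cases i
          · simpa using (by linarith [heb k, norm_nonneg (ε k)] : ‖δ k‖ ≤ e k)
          · simp [he0 k]
        calc ‖M k i 1‖ ≤ e k := h1
          _ = 1 * e k := (one_mul _).symm
          _ ≤ B * e (k+0) := by
              rw [Nat.add_zero]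
              exact mul_le_mul_of_nonneg_right hB1 (he0 k)
    | succ m =>
        rw [hrec1, norm_mul]
        calc ‖P m i 0‖ * ‖δ (k+m+1)‖ ≤ B * e (k+m+1) := by
              have : ‖δ (k+m+1)‖ ≤ e (k+m+1) := by linarith [heb (k+m+1), norm_nonneg (ε (k+m+1))]
              exact mul_le_mul (hP0B m i) this (norm_nonneg _) (by linarith)
          _ = B * e (k + (m+1)) := by ring_nf
  -- entry (i,0) is Cauchy
  have hconv0 : ∀ i, ∃ l : ℂ, Tendsto (fun m => P m i 0) atTop (nhds l) := by
    intro i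
    apply cauchySeq_tendsto_of_complete
    apply cauchySeq_of_dist_le_of_summable (fun m => B * e (k+m+1) + B * e (k+m))
    · intro m
      rw [dist_eq_norm]
      have : P m i 0 - P (m+1) i 0 = -(P m i 0 * ε (k+m+1) + P m i 1) := by
        rw [hrec0]; ring
      rw [this, norm_neg]
      calc ‖P m i 0 * ε (k+m+1) + P m i 1‖
          ≤ ‖P m i 0‖ * ‖ε (k+m+1)‖ + ‖P m i 1‖ := by
            refine (norm_add_le _ _).trans ?_
            rw [norm_mul]
        _ ≤ B * e (k+m+1) + B * e (k+m) := by
            refine add_le_add ?_ (hP1 m i)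
            exact mul_le_mul (hP0B m i)
              (by linarith [heb (k+m+1), norm_nonneg (δ (k+m+1))]) (norm_nonneg _)
              (by linarith)
    · have h1 : Summable (fun m => e (k+m+1)) := by
        have := (summable_nat_add_iff (k+1)).mpr hes
        exact this.congr fun m => by ring_nf
      have h2 : Summable (fun m => e (k+m)) := by
        have := (summable_nat_add_iff k).mpr hes
        exact this.congr fun m => by ring_nf
      exact (h1.mul_left B).add (h2.mul_left B)
  choose l hl using hconv0
  refine ⟨Matrix.of (fun i j => if j = 0 then l i else 0), ?_, ?_⟩
  · refine tendsto_pi_nhds.mpr ?_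
    intro i
    rw [tendsto_pi_nhds]
    intro j
    fin_cases j
    · simpa using hl i
    · have : Tendsto (fun m => P m i 1) atTop (nhds 0) := by
        apply squeeze_zero_norm (fun m => hP1 m i)
        have : Tendsto (fun m => e (k+m)) atTop (nhds 0) := by
          have h2 : Summable (fun m => e (k+m)) := by
            have := (summable_nat_add_iff k).mpr hes
            exact this.congr fun m => by ring_nf
          exact h2.tendsto_atTop_zero
        simpa using this.const_mul B
      simpa using this
  · intro i
    constructor
    · have hle : ‖l i‖ ≤ B := by
        apply le_of_tendsto (hl i).norm
        filter_upwards with m using hP0B m i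
      simpa using hle
    · simp

/-- Explicit forward solution via infinite matrix products: for `μ ≠ 0`, `b, b+n ∉ ℤ`, and
`M k = !![1 + λ/((k+b)(k+b+n-1)), μ²/((k+b)(k+b+n-1)); 1, 0]` (`k ≥ 1`), the infinite
products `R k = M k * M (k+1) * ⋯` exist; setting `c k = (R k)₂₁` for `k ≥ 1`,
`c 0 = (R 1)₁₁` and `a k = μ^k c k / (b(b+1)⋯(b+k))`, the sequence `a` satisfies the Heun
recurrence at every `k ≥ 1` and `∑_{k ≥ 1} a_k z^k` converges everywhere. -/
theorem heun_forward_solution_formula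
    (n lam mu b : ℂ) (hmu : mu ≠ 0)
    (hb : ∀ m : ℤ, b ≠ (m : ℂ)) (hbn : ∀ m : ℤ, b + n ≠ (m : ℂ))
    (M : ℕ → Matrix (Fin 2) (Fin 2) ℂ)
    (hM : ∀ k : ℕ, 1 ≤ k →
      M k = !![1 + lam / (((k : ℂ) + b) * ((k : ℂ) + b + n - 1)),
               mu ^ 2 / (((k : ℂ) + b) * ((k : ℂ) + b + n - 1));
               1, 0]) :
    ∃ R : ℕ → Matrix (Fin 2) (Fin 2) ℂ,
      (∀ k : ℕ, 1 ≤ k → Tendsto (fun m => opProd M k m) atTop (nhds (R k))) ∧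
      ∀ a : ℕ → ℂ,
        a 0 = R 1 0 0 / b →
        (∀ k : ℕ, 1 ≤ k →
          a k = mu ^ k * R k 1 0 / ∏ j ∈ Finset.range (k + 1), (b + (j : ℂ))) →
        (∀ k : ℕ, HeunRec n lam mu b (a k) (a (k + 1)) (a (k + 2)) ((k : ℂ) + 1)) ∧
        (∀ z : ℂ, Summable fun k : ℕ => a (k + 1) * z ^ (k + 1)) := by
  -- nonvanishing of the various denominators
  have hbj : ∀ j : ℕ, b + (j:ℂ) ≠ 0 := by
    intro j h
    apply hb (-(j:ℤ))
    have : b = -(j:ℂ) := by linear_combination h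
    rw [this]; push_cast; ring
  have hD1 : ∀ j : ℕ, (j:ℂ) + b ≠ 0 := by
    intro j h; exact hbj j (by linear_combination h)
  have hD2 : ∀ j : ℕ, (j:ℂ) + b + n - 1 ≠ 0 := by
    intro j h
    apply hbn (1 - (j:ℤ))
    push_cast
    linear_combination h
  -- the perturbation sequences
  set ε : ℕ → ℂ := fun j => lam / (((j:ℂ) + b) * ((j:ℂ) + b + n - 1)) with hεdef
  set δ : ℕ → ℂ := fun j => mu ^ 2 / (((j:ℂ) + b) * ((j:ℂ) + b + n - 1)) with hδdef
  set e : ℕ → ℝ := fun j => ‖ε j‖ + ‖δ j‖ with hedef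
  have he0 : ∀ j, 0 ≤ e j := fun j => add_nonneg (norm_nonneg _) (norm_nonneg _)
  have hes : Summable e := by
    have h := aux_summable' b (b + n - 1) lam (mu ^ 2)
    refine h.congr fun j => ?_
    have : (j:ℂ) + (b + n - 1) = (j:ℂ) + b + n - 1 := by ring
    simp only [hedef, hεdef, hδdef, this]
  have hM' : ∀ k, 1 ≤ k → M k = !![1 + ε k, δ k; 1, 0] := fun k hk => hM k hk
  set B := Real.exp (∑' j, e j) with hBdef
  -- existence of the infinite products
  have hex : ∀ k : ℕ, ∃ L : Matrix (Fin 2) (Fin 2) ℂ, 1 ≤ k →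
      (Tendsto (fun m => opProd M k m) atTop (nhds L) ∧ ∀ i, ‖L i 0‖ ≤ B ∧ L i 1 = 0) := by
    intro k
    by_cases hk : 1 ≤ k
    · obtain ⟨L, hL1, hL2⟩ := prod_converges M ε δ e he0 (fun j => le_refl _) hes hM' k hk
      exact ⟨L, fun _ => ⟨hL1, hL2⟩⟩
    · exact ⟨0, fun h => absurd h hk⟩
  choose R hR using hex
  have hRt : ∀ k, 1 ≤ k → Tendsto (fun m => opProd M k m) atTop (nhds (R k)) :=
    fun k hk => (hR k hk).1
  have hRb : ∀ k, 1 ≤ k → ‖R k 0 0‖ ≤ B := fun k hk => ((hR k hk).2 0).1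
  have hRrel : ∀ k, 1 ≤ k → R k = M k * R (k+1) := by
    intro k hk
    have t1 : Tendsto (fun m => opProd M k (m+1)) atTop (nhds (R k)) :=
      (hRt k hk).comp (tendsto_add_atTop_nat 1)
    have t2 : Tendsto (fun m => opProd M k (m+1)) atTop (nhds (M k * R (k+1))) := by
      simp only [opProd_left']
      exact (hRt (k+1) (by omega)).const_mul (M k)
    exact tendsto_nhds_unique t1 t2
  have hc1 : ∀ k, 1 ≤ k → R k 1 0 = R (k+1) 0 0 := by
    intro k hk
    rw [hRrel k hk, Matrix.mul_apply, Fin.sum_univ_two, hM' k hk]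
    simp
  have hc0 : ∀ k, 1 ≤ k →
      R k 0 0 = (1 + ε k) * R (k+1) 0 0 + δ k * R (k+2) 0 0 := by
    intro k hk
    rw [hRrel k hk, Matrix.mul_apply, Fin.sum_univ_two, hM' k hk, hc1 (k+1) (by omega)]
    simp
  refine ⟨R, hRt, ?_⟩
  intro a ha0 hak
  have ha : ∀ k, a k = mu ^ k * R (k+1) 0 0 / ∏ j ∈ Finset.range (k+1), (b + (j:ℂ)) := by
    intro k
    cases k with
    | zero => simpa using ha0
    | succ k => rw [hak (k+1) (by omega), hc1 (k+1) (by omega)]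
  have hPne : ∀ k : ℕ, (∏ j ∈ Finset.range (k+1), (b + (j:ℂ))) ≠ 0 :=
    fun k => Finset.prod_ne_zero_iff.mpr (fun j _ => hbj j)
  constructor
  · -- the Heun recurrence
    intro k
    show ((((k:ℂ)+1) + b) * (((k:ℂ)+1) + b + n - 1) + lam) * a (k+1)
        - mu * (((k:ℂ)+1) + b + n - 1) * a k + mu * (((k:ℂ)+1) + b + 1) * a (k+2) = 0
    have hrel := hc0 (k+1) (by omega)
    have hu : ((k:ℂ) + 1 + b) ≠ 0 := by
      have := hD1 (k+1); push_cast at this; exact this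
    have hv : ((k:ℂ) + 1 + b + n - 1) ≠ 0 := by
      have := hD2 (k+1); push_cast at this; exact this
    have hq2 : (b + ((k:ℂ) + 2)) ≠ 0 := by
      have := hbj (k+2); push_cast at this; exact this
    have hrel' : ((k:ℂ)+1+b) * ((k:ℂ)+1+b+n-1) * R (k+1) 0 0
        = (((k:ℂ)+1+b) * ((k:ℂ)+1+b+n-1) + lam) * R (k+2) 0 0 + mu^2 * R (k+3) 0 0 := by
      have h := hrel
      simp only [hεdef, hδdef] at h
      push_cast at h
      field_simp at h
      simp only [show k+1+1 = k+2 by omega, show k+1+2 = k+3 by omega] at h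
      linear_combination h
    rw [ha k, ha (k+1), ha (k+2),
      Finset.prod_range_succ (fun j => b + (j:ℂ)) (k+1),
      Finset.prod_range_succ (fun j => b + (j:ℂ)) (k+2),
      Finset.prod_range_succ (fun j => b + (j:ℂ)) (k+1)]
    have hq1 : b + ((k:ℂ) + 1) ≠ 0 := by
      have := hbj (k+1); push_cast at this; exact this
    simp only [show k+1+1 = k+2 by omega, show k+2+1 = k+3 by omega]
    push_cast
    field_simp [hPne k, hq1, hq2]
    linear_combination (-(mu^(k+1) * (b + ((k:ℂ)+2)))) * hrel'
  · -- summability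
    intro z
    set c : ℝ := ‖mu‖ * ‖z‖ with hcdef
    have hc0' : 0 ≤ c := mul_nonneg (norm_nonneg _) (norm_nonneg _)
    set g : ℕ → ℝ := fun k => c ^ (k+1) / ∏ j ∈ Finset.range (k+2), ‖b + (j:ℂ)‖ with hgdef
    have hQpos : ∀ k : ℕ, 0 < ∏ j ∈ Finset.range (k+2), ‖b + (j:ℂ)‖ := by
      intro k
      apply Finset.prod_pos
      intro j _
      exact norm_pos_iff.mpr (hbj j)
    have hg0 : ∀ k, 0 ≤ g k := by
      intro k
      apply div_nonneg (pow_nonneg hc0' _) (hQpos k).le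
    have hgs : Summable g := by
      apply summable_of_ratio_norm_eventually_le (r := 1/2) (by norm_num)
      have h := (tendsto_natCast_atTop_atTop (R := ℝ)).eventually_ge_atTop (2 * c + ‖b‖)
      filter_upwards [h] with k hk
      have hnorm : (k:ℝ) + 2 - ‖b‖ ≤ ‖b + ((k:ℕ)+2 : ℂ)‖ := by
        have h1 : ‖(((k:ℕ):ℂ) + 2)‖ = (k:ℝ) + 2 := by
          have h2 : (((k:ℕ):ℂ) + 2) = (((k+2:ℕ)):ℂ) := by push_cast; ring
          rw [h2, Complex.norm_natCast]; push_cast; ring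
        have h3 : ‖(((k:ℕ):ℂ) + 2)‖ ≤ ‖b + (((k:ℕ):ℂ) + 2)‖ + ‖b‖ := by
          calc ‖(((k:ℕ):ℂ) + 2)‖ = ‖(b + (((k:ℕ):ℂ) + 2)) - b‖ := by ring_nf
            _ ≤ ‖b + (((k:ℕ):ℂ) + 2)‖ + ‖b‖ := norm_sub_le _ _
        rw [h1] at h3
        linarith
      have hden : 2 * c ≤ ‖b + ((k:ℕ)+2 : ℂ)‖ := by linarith
      have hdenpos : (0:ℝ) < ‖b + ((k:ℕ)+2 : ℂ)‖ := by
        have := norm_nonneg b; linarith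
      have hgrec : g (k+1) = g k * (c / ‖b + ((k:ℕ)+2 : ℂ)‖) := by
        show c ^ (k+2) / ∏ j ∈ Finset.range (k+3), ‖b + (j:ℂ)‖
          = c ^ (k+1) / (∏ j ∈ Finset.range (k+2), ‖b + (j:ℂ)‖) * (c / ‖b + ((k:ℕ)+2 : ℂ)‖)
        rw [Finset.prod_range_succ (fun j => ‖b + (j:ℂ)‖) (k+2), pow_succ]
        have hne1 := (hQpos k).ne'
        have hne2 : ‖b + (((k+2:ℕ)):ℂ)‖ ≠ 0 := (norm_pos_iff.mpr (hbj (k+2))).ne'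
        have hcast : (((k+2:ℕ)):ℂ) = ((k:ℕ):ℂ) + 2 := by push_cast; ring
        rw [hcast] at hne2 ⊢
        field_simp
      rw [Real.norm_of_nonneg (hg0 (k+1)), Real.norm_of_nonneg (hg0 k), hgrec]
      have hratio : c / ‖b + ((k:ℕ)+2 : ℂ)‖ ≤ 1/2 := by
        rw [div_le_iff₀ hdenpos]
        linarith
      calc g k * (c / ‖b + ((k:ℕ)+2 : ℂ)‖) ≤ g k * (1/2) :=
            mul_le_mul_of_nonneg_left hratio (hg0 k)
        _ = 1/2 * g k := by ring
    apply Summable.of_norm_bounded (hgs.mul_left B)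
    intro k
    rw [ha (k+1)]
    have heq : ‖mu ^ (k+1) * R (k+1+1) 0 0 / (∏ j ∈ Finset.range (k+1+1), (b + (j:ℂ))) * z ^ (k+1)‖
        = c ^ (k+1) * ‖R (k+2) 0 0‖ / ∏ j ∈ Finset.range (k+2), ‖b + (j:ℂ)‖ := by
      rw [norm_mul, norm_div, norm_mul, norm_pow, norm_pow, norm_prod, hcdef]
      ring_nf
    rw [heq]
    have hRB : ‖R (k+2) 0 0‖ ≤ B := hRb (k+2) (by omega)
    have hQ := hQpos k
    have hBg : B * g k = B * c ^ (k+1) / ∏ j ∈ Finset.range (k+2), ‖b + (j:ℂ)‖ := by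
      rw [hgdef]; ring
    rw [hBg]
    have hnum : c ^ (k+1) * ‖R (k+2) 0 0‖ ≤ B * c ^ (k+1) := by
      calc c ^ (k+1) * ‖R (k+2) 0 0‖ ≤ c ^ (k+1) * B :=
            mul_le_mul_of_nonneg_left hRB (pow_nonneg hc0' _)
        _ = B * c ^ (k+1) := mul_comm _ _
    exact div_le_div_of_nonneg_right hnum hQ.le |>.trans (le_refl _)
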